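/- Let T be a series-parallel term with m leaves in which every leaf has interdiction cost c = 1, let U ≥ 1 be the maximum over all leaves of the two capacities u¹, u², let B ∈ ℕ be the interdiction budget, and let ε > 0. Then there exists a set 𝒜 of interdiction strategies for T, each of cost at most B, with |𝒜| ≤ (⌈log_{1+ε}(m·U)⌉ + 2)², such that for every interdiction strategy γ for T with cost(T,γ) ≤ B there exists γ' ∈ 𝒜 with val(T,γ') componentwise less than or equal to (1+ε)·val(T,γ). In particular, for BMFNI on two-terminal series-parallel graphs with unit interdiction costs there is, for every ε > 0, an ε-approximation of the set of nondominated points whose size is polynomial in m and log U and 1/ε. -/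

import Mathlib

/-- A series-parallel term: a leaf carries two arc capacities and an
interdiction cost; inner nodes are parallel or series compositions. -/
inductive SPTerm : Type
  | leaf (u1 u2 c : ℕ) : SPTerm
  | parallel (T1 T2 : SPTerm) : SPTerm
  | series (T1 T2 : SPTerm) : SPTerm

/-- The number of leaves (arcs) of a series-parallel term. -/
def SPTerm.numLeaves : SPTerm → ℕ
  | .leaf _ _ _ => 1
  | .parallel T1 T2 => T1.numLeaves + T2.numLeaves
  | .series T1 T2 => T1.numLeaves + T2.numLeaves

/-- The maximum over all leaves of the two capacities. -/
def SPTerm.maxCap : SPTerm → ℕ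
  | .leaf u1 u2 _ => max u1 u2
  | .parallel T1 T2 => max T1.maxCap T2.maxCap
  | .series T1 T2 => max T1.maxCap T2.maxCap

/-- Every leaf has interdiction cost `1`. -/
def SPTerm.unitCosts : SPTerm → Prop
  | .leaf _ _ c => c = 1
  | .parallel T1 T2 => T1.unitCosts ∧ T2.unitCosts
  | .series T1 T2 => T1.unitCosts ∧ T2.unitCosts

/-- An interdiction strategy for a series-parallel term: each leaf is
interdicted (`true`) or not (`false`). -/
inductive SPStrat : SPTerm → Type
  | leaf (u1 u2 c : ℕ) (interdicted : Bool) : SPStrat (.leaf u1 u2 c)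
  | parallel {T1 T2 : SPTerm} (γ1 : SPStrat T1) (γ2 : SPStrat T2) :
      SPStrat (.parallel T1 T2)
  | series {T1 T2 : SPTerm} (γ1 : SPStrat T1) (γ2 : SPStrat T2) :
      SPStrat (.series T1 T2)

/-- The total interdiction cost of a strategy. -/
def SPcost : {T : SPTerm} → SPStrat T → ℕ
  | _, .leaf _ _ c b => if b then c else 0
  | _, .parallel γ1 γ2 => SPcost γ1 + SPcost γ2
  | _, .series γ1 γ2 => SPcost γ1 + SPcost γ2

/-- The vector of the two maximum flow values of the interdicted
series-parallel graph. -/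
def SPval : {T : SPTerm} → SPStrat T → ℕ × ℕ
  | _, .leaf u1 u2 _ b => if b then (0, 0) else (u1, u2)
  | _, .parallel γ1 γ2 => SPval γ1 + SPval γ2
  | _, .series γ1 γ2 =>
      (min (SPval γ1).1 (SPval γ2).1, min (SPval γ1).2 (SPval γ2).2)

/-! ### Auxiliary machinery -/

/-- The list of all strategies for a term. -/
def allStrats : (T : SPTerm) → List (SPStrat T)
  | .leaf u1 u2 c => [.leaf u1 u2 c true, .leaf u1 u2 c false]
  | .parallel T1 T2 =>
      (allStrats T1).flatMap fun γ1 => (allStrats T2).map (SPStrat.parallel γ1)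
  | .series T1 T2 =>
      (allStrats T1).flatMap fun γ1 => (allStrats T2).map (SPStrat.series γ1)

theorem mem_allStrats : ∀ {T : SPTerm} (γ : SPStrat T), γ ∈ allStrats T
  | _, .leaf u1 u2 c b => by cases b <;> simp [allStrats]
  | _, .parallel γ1 γ2 => by
      simp only [allStrats, List.mem_flatMap, List.mem_map]
      exact ⟨γ1, mem_allStrats γ1, γ2, mem_allStrats γ2, rfl⟩
  | _, .series γ1 γ2 => by
      simp only [allStrats, List.mem_flatMap, List.mem_map]
      exact ⟨γ1, mem_allStrats γ1, γ2, mem_allStrats γ2, rfl⟩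

instance (T : SPTerm) : Nonempty (SPStrat T) := by
  induction T with
  | leaf u1 u2 c => exact ⟨.leaf u1 u2 c false⟩
  | parallel T1 T2 h1 h2 => exact ⟨.parallel h1.some h2.some⟩
  | series T1 T2 h1 h2 => exact ⟨.series h1.some h2.some⟩

theorem numLeaves_pos (T : SPTerm) : 1 ≤ T.numLeaves := by
  induction T with
  | leaf u1 u2 c => exact le_refl 1
  | parallel T1 T2 h1 h2 => exact le_trans h1 (Nat.le_add_right _ _)
  | series T1 T2 h1 h2 => exact le_trans h1 (Nat.le_add_right _ _)

theorem val_le : ∀ {T : SPTerm} (γ : SPStrat T),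
    (SPval γ).1 ≤ T.numLeaves * T.maxCap ∧ (SPval γ).2 ≤ T.numLeaves * T.maxCap
  | _, .leaf u1 u2 c b => by
      cases b <;> simp [SPval, SPTerm.numLeaves, SPTerm.maxCap]
  | _, .parallel γ1 γ2 => by
      obtain ⟨h11, h12⟩ := val_le γ1
      obtain ⟨h21, h22⟩ := val_le γ2
      simp only [SPval, SPTerm.numLeaves, SPTerm.maxCap, Prod.fst_add, Prod.snd_add,
        Nat.add_mul]
      constructor <;>
        exact Nat.add_le_add
          (le_trans (by assumption) (Nat.mul_le_mul_left _ (le_max_left _ _)))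
          (le_trans (by assumption) (Nat.mul_le_mul_left _ (le_max_right _ _)))
  | _, .series γ1 γ2 => by
      obtain ⟨h11, h12⟩ := val_le γ1
      constructor <;>
      · simp only [SPval, SPTerm.numLeaves, SPTerm.maxCap]
        refine le_trans (min_le_left _ _) (le_trans (by assumption) ?_)
        exact Nat.mul_le_mul (Nat.le_add_right _ _) (le_max_left _ _)

/-- The bucket of a value: `0` for value `0`, otherwise determined by the
ceiling of the base-`q` logarithm. -/
noncomputable def bucket (q : ℝ) (v : ℕ) : ℕ :=
  if v = 0 then 0 else (⌈Real.logb q v⌉).toNat + 1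

theorem bucket_key {q : ℝ} (hq : 1 < q) {a b : ℕ}
    (h : bucket q a = bucket q b) : (b : ℝ) ≤ q * a := by
  have hq0 : (0 : ℝ) < q := lt_trans one_pos hq
  rcases Nat.eq_zero_or_pos a with ha | ha
  · subst ha
    have : b = 0 := by
      by_contra hb
      simp [bucket, hb] at h
    simp [this]
  rcases Nat.eq_zero_or_pos b with hb | hb
  · subst hb
    simp only [Nat.cast_zero]
    positivity
  have ha' : (0 : ℝ) < a := by exact_mod_cast ha
  have hb' : (0 : ℝ) < b := by exact_mod_cast hb
  have ha1 : (1 : ℝ) ≤ a := by exact_mod_cast ha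
  have hb1 : (1 : ℝ) ≤ b := by exact_mod_cast hb
  have hca : 0 ≤ ⌈Real.logb q (a : ℝ)⌉ :=
    Int.ceil_nonneg (Real.logb_nonneg hq ha1)
  have hcb : 0 ≤ ⌈Real.logb q (b : ℝ)⌉ :=
    Int.ceil_nonneg (Real.logb_nonneg hq hb1)
  have hkk : ⌈Real.logb q (a : ℝ)⌉ = ⌈Real.logb q (b : ℝ)⌉ := by
    simp only [bucket, if_neg ha.ne', if_neg hb.ne'] at h
    omega
  set k : ℤ := ⌈Real.logb q (a : ℝ)⌉ with hk
  have h1 : (b : ℝ) ≤ q ^ (k : ℝ) := by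
    rw [← Real.logb_le_iff_le_rpow hq hb']
    rw [hkk]
    exact_mod_cast Int.le_ceil _
  have h2 : q ^ ((k : ℝ) - 1) < (a : ℝ) := by
    rw [← Real.lt_logb_iff_rpow_lt hq ha']
    have := Int.ceil_lt_add_one (Real.logb q (a : ℝ))
    push_cast
    linarith [this]
  have h3 : q ^ (k : ℝ) = q ^ ((k : ℝ) - 1) * q := by
    rw [show (k : ℝ) = ((k : ℝ) - 1) + 1 by ring, Real.rpow_add hq0,
      Real.rpow_one]
    norm_num
  calc (b : ℝ) ≤ q ^ (k : ℝ) := h1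
    _ = q ^ ((k : ℝ) - 1) * q := h3
    _ ≤ (a : ℝ) * q := by nlinarith
    _ = q * a := mul_comm _ _

theorem bucket_le {q : ℝ} (hq : 1 < q) {v n : ℕ} (hv : v ≤ n) :
    bucket q v ≤ (⌈Real.logb q n⌉).toNat + 1 := by
  rcases Nat.eq_zero_or_pos v with h0 | h0
  · simp [bucket, h0]
  · have hv' : (0 : ℝ) < v := by exact_mod_cast h0
    have hle : Real.logb q v ≤ Real.logb q n := by
      apply Real.logb_le_logb_of_le hq hv'
      exact_mod_cast hv
    simp only [bucket, if_neg (Nat.pos_iff_ne_zero.mp h0)]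
    have := Int.ceil_le_ceil hle
    omega

theorem stmt19 (T : SPTerm) (hT : T.unitCosts)
    (U : ℕ) (hU : U = T.maxCap) (hU1 : 1 ≤ U) (B : ℕ) (ε : ℝ) (hε : 0 < ε) :
    ∃ 𝒜 : Set (SPStrat T), 𝒜.Finite ∧
      (∀ γ' ∈ 𝒜, SPcost γ' ≤ B) ∧
      (𝒜.ncard : ℤ) ≤ (⌈Real.logb (1 + ε) ((T.numLeaves * U : ℕ) : ℝ)⌉ + 2) ^ 2 ∧
      ∀ γ : SPStrat T, SPcost γ ≤ B → ∃ γ' ∈ 𝒜,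
        ((SPval γ').1 : ℝ) ≤ (1 + ε) * ((SPval γ).1 : ℝ) ∧
        ((SPval γ').2 : ℝ) ≤ (1 + ε) * ((SPval γ).2 : ℝ) := by
  set q : ℝ := 1 + ε with hqdef
  have hq : 1 < q := by simp [hqdef]; linarith
  set n : ℕ := T.numLeaves * U with hn
  have hn1 : 1 ≤ n := Nat.one_le_iff_ne_zero.mpr
    (Nat.mul_ne_zero (Nat.one_le_iff_ne_zero.mp (numLeaves_pos T))
      (Nat.one_le_iff_ne_zero.mp hU1))
  set K : ℕ := (⌈Real.logb q (n : ℝ)⌉).toNat with hK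
  -- value bound
  have hval : ∀ γ : SPStrat T, (SPval γ).1 ≤ n ∧ (SPval γ).2 ≤ n := by
    intro γ; rw [hn, hU]; exact val_le γ
  set S : Set (SPStrat T) := {γ | SPcost γ ≤ B} with hSdef
  have hSfin : S.Finite :=
    Set.Finite.subset (allStrats T).finite_toSet (fun γ _ => mem_allStrats γ)
  set φ : SPStrat T → ℕ × ℕ :=
    fun γ => (bucket q (SPval γ).1, bucket q (SPval γ).2) with hφ
  set g : ℕ × ℕ → SPStrat T := Function.invFunOn φ S with hg
  refine ⟨g '' (φ '' S), ((hSfin.image φ).image g), ?_, ?_, ?_⟩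
  · rintro γ' ⟨p, hp, rfl⟩
    rcases hp with ⟨γ, hγ, rfl⟩
    exact Function.invFunOn_mem ⟨γ, hγ, rfl⟩
  · -- cardinality bound
    have hsub : φ '' S ⊆ ↑(Finset.range (K + 2) ×ˢ Finset.range (K + 2)) := by
      rintro p ⟨γ, hγ, rfl⟩
      simp only [Finset.coe_product, Set.mem_prod, Finset.mem_coe,
        Finset.mem_range]
      exact ⟨Nat.lt_succ_of_le (bucket_le hq (hval γ).1),
        Nat.lt_succ_of_le (bucket_le hq (hval γ).2)⟩
    have h1 : (g '' (φ '' S)).ncard ≤ (φ '' S).ncard :=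
      Set.ncard_image_le (hSfin.image φ)
    have h2 : (φ '' S).ncard ≤ (K + 2) * (K + 2) := by
      have hcard : (↑(Finset.range (K + 2) ×ˢ Finset.range (K + 2)) :
          Set (ℕ × ℕ)).ncard = (K + 2) * (K + 2) := by
        rw [Set.ncard_coe_finset, Finset.card_product]
        simp
      exact le_trans (Set.ncard_le_ncard hsub
        (Finset.range (K + 2) ×ˢ Finset.range (K + 2)).finite_toSet) hcard.le
    have hcl : 0 ≤ ⌈Real.logb q (n : ℝ)⌉ :=
      Int.ceil_nonneg (Real.logb_nonneg hq (by exact_mod_cast hn1))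
    have hKZ : (K : ℤ) = ⌈Real.logb q (n : ℝ)⌉ := Int.toNat_of_nonneg hcl
    have : ((g '' (φ '' S)).ncard : ℤ) ≤ ((K : ℤ) + 2) ^ 2 := by
      have := le_trans h1 h2
      push_cast
      nlinarith [this]
    rw [hKZ] at this
    exact this
  · -- approximation property
    intro γ hγB
    have hγS : γ ∈ S := hγB
    have hmem : φ γ ∈ φ '' S := ⟨γ, hγS, rfl⟩
    refine ⟨g (φ γ), ⟨φ γ, hmem, rfl⟩, ?_⟩
    have heq : φ (g (φ γ)) = φ γ := Function.invFunOn_eq ⟨γ, hγS, rfl⟩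
    have h1 : bucket q (SPval (g (φ γ))).1 = bucket q (SPval γ).1 :=
      congrArg Prod.fst heq
    have h2 : bucket q (SPval (g (φ γ))).2 = bucket q (SPval γ).2 :=
      congrArg Prod.snd heq
    exact ⟨bucket_key hq h1.symm, bucket_key hq h2.symm⟩
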